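/- There exists a compact set K ⊆ [0,1] of positive Lebesgue measure such that the set E = {x ∈ ℝ⁵ : x₂ ≥ 0, x₄ ≥ 0, and ∃ t ∈ K, (x₅ − t)² ≤ 2·x₂³·x₄} in 𝔽₂₃ satisfies: (i) E is X₁-invariant and forward X₂-monotone, i.e. for every x ∈ E, every a ∈ ℝ and every s ≥ 0, x∗(a,0,0,0,0) ∈ E and x∗(0,s,0,0,0) ∈ E; and (ii) for all p₁, p₃ ∈ ℝ and all p₄ > 0, the one-dimensional slice function x₅ ↦ inf{x₂ ∈ ℝ : (p₁, x₂, p₃, p₄, x₅) ∈ E} does not have locally bounded variation on ℝ. (In particular, E is a set with constant horizontal normal which is not a Caccioppoli set in the Euclidean sense.) -/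

import Mathlib

open MeasureTheory Set ENNReal Filter

/-- The group operation of the free Carnot group `𝔽₂₃` of rank 2 and step 3, in
exponential coordinates of the second kind on `ℝ⁵`. -/
noncomputable def F23mul (x y : Fin 5 → ℝ) : Fin 5 → ℝ :=
  ![x 0 + y 0,
    x 1 + y 1,
    x 2 + y 2 - x 0 * y 1,
    x 3 + y 3 - x 0 * y 2 + x 0 ^ 2 * y 1 / 2,
    x 4 + y 4 + x 0 * x 1 * y 1 + x 0 * y 1 ^ 2 / 2 - x 1 * y 2]

/-- The union, over `t ∈ K`, of the translates by `t·e₅` of the cone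
`𝒞 = {x : x₂ ≥ 0, x₄ ≥ 0, x₅² ≤ 2x₂³x₄}` (coordinates indexed from `0`). -/
noncomputable def Eset (K : Set ℝ) : Set (Fin 5 → ℝ) :=
  {x | 0 ≤ x 1 ∧ 0 ≤ x 3 ∧ ∃ t ∈ K, (x 4 - t) ^ 2 ≤ 2 * (x 1) ^ 3 * x 3}

/-! ### The fat Cantor-like set `KK` -/

noncomputable def qq (n : ℕ) : ℝ := 1 - 1 / Real.sqrt (n + 1)
noncomputable def gp (n : ℕ) : ℝ := qq (n + 1) - qq n
noncomputable def al (n : ℕ) : ℝ := qq n + gp n / 3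
noncomputable def be (n : ℕ) : ℝ := qq n + 2 * gp n / 3
noncomputable def md (n : ℕ) : ℝ := qq n + gp n / 2
noncomputable def KK : Set ℝ := Icc 0 1 \ ⋃ n, Ioo (al n) (be n)

lemma qq_zero : qq 0 = 0 := by simp [qq]

lemma sqrt_pos' (n : ℕ) : 0 < Real.sqrt (n + 1) :=
  Real.sqrt_pos.2 (by positivity)

lemma one_le_sqrt' (n : ℕ) : 1 ≤ Real.sqrt (n + 1) := by
  have h := Real.sqrt_le_sqrt (show (1:ℝ) ≤ n+1 by linarith [Nat.cast_nonneg (α := ℝ) n])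
  simpa using h

lemma qq_nonneg (n : ℕ) : 0 ≤ qq n := by
  have h1 := one_le_sqrt' n
  have h2 := sqrt_pos' n
  have : 1 / Real.sqrt (n+1) ≤ 1 := by rw [div_le_one h2]; exact h1
  simp only [qq]; linarith

lemma qq_lt_one (n : ℕ) : qq n < 1 := by
  have h2 := sqrt_pos' n
  have : 0 < 1 / Real.sqrt (n+1) := by positivity
  simp only [qq]; linarith

lemma cast_succ_real (n : ℕ) : ((n+1 : ℕ) : ℝ) + 1 = (n : ℝ) + 2 := by push_cast; ring

lemma qq_strictMono : StrictMono qq := by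
  apply strictMono_nat_of_lt_succ
  intro n
  have h1 := sqrt_pos' n
  have h3 : Real.sqrt (n+1) < Real.sqrt ((n+1:ℕ)+1) := by
    apply Real.sqrt_lt_sqrt (by positivity)
    rw [cast_succ_real]; linarith
  have h2 : 0 < Real.sqrt ((n+1:ℕ)+1) := lt_trans h1 h3
  have : 1 / Real.sqrt ((n+1:ℕ)+1) < 1 / Real.sqrt (n+1) :=
    one_div_lt_one_div_of_lt h1 h3
  simp only [qq]
  linarith

lemma qq_mono : Monotone qq := qq_strictMono.monotone

lemma qq_succ_gt (n : ℕ) : qq n < qq (n + 1) := qq_strictMono (Nat.lt_succ_self n)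

lemma gp_pos (n : ℕ) : 0 < gp n := sub_pos.2 (qq_succ_gt n)

lemma gp_ge (n : ℕ) : 1 / (2 * ((n:ℝ) + 2) * Real.sqrt ((n:ℝ) + 2)) ≤ gp n := by
  have ha := sqrt_pos' n
  set a := Real.sqrt (n+1) with hadef
  set b := Real.sqrt ((n:ℝ)+2) with hbdef
  have hb : 0 < b := Real.sqrt_pos.2 (by positivity)
  have ha2 : a ^ 2 = (n:ℝ) + 1 := by rw [hadef, sq, Real.mul_self_sqrt (by positivity)]
  have hb2 : b ^ 2 = (n:ℝ) + 2 := by rw [hbdef, sq, Real.mul_self_sqrt (by positivity)]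
  have hab : a ≤ b := by nlinarith
  have hgp : gp n = 1 / a - 1 / b := by
    simp only [gp, qq, cast_succ_real, hbdef, hadef]
    ring
  rw [hgp, ← hb2]
  rw [div_sub_div _ _ (ne_of_gt ha) (ne_of_gt hb), div_le_div_iff₀ (by positivity) (by positivity)]
  nlinarith [mul_pos ha hb, sq_nonneg (b - a), mul_pos (mul_pos ha hb) hb]

lemma mem_Icc_al (n : ℕ) : al n ∈ Icc (0:ℝ) 1 := by
  have h := qq_lt_one (n+1); have h2 := qq_succ_gt n; have h3 := qq_nonneg n
  constructor <;> simp only [al, gp] <;> linarith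

lemma mem_Icc_md (n : ℕ) : md n ∈ Icc (0:ℝ) 1 := by
  have h := qq_lt_one (n+1); have h2 := qq_succ_gt n; have h3 := qq_nonneg n
  constructor <;> simp only [md, gp] <;> linarith

lemma KK_compact : IsCompact KK := by
  have : IsClosed KK := (isClosed_Icc).sdiff (isOpen_iUnion (fun n => isOpen_Ioo))
  exact (isCompact_Icc).of_isClosed_subset this diff_subset

lemma al_mem_KK (n : ℕ) : al n ∈ KK := by
  refine ⟨mem_Icc_al n, ?_⟩
  simp only [mem_iUnion, mem_Ioo, not_exists, not_and, not_lt]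
  intro m h1
  rcases lt_trichotomy m n with hm | hm | hm
  · have h4 := qq_succ_gt m; have h5 := qq_succ_gt n
    have h6 : qq (m+1) ≤ qq n := qq_mono hm
    simp only [al, be, gp] at *; linarith
  · subst hm; exact absurd h1 (lt_irrefl _)
  · exfalso
    have h4 := qq_succ_gt m; have h5 := qq_succ_gt n
    have h6 : qq (n+1) ≤ qq m := qq_mono hm
    simp only [al, gp] at h1; linarith

lemma md_far (n : ℕ) (t : ℝ) (ht : t ∈ KK) : (gp n / 6) ^ 2 ≤ (md n - t) ^ 2 := by
  have hnot : t ∉ Ioo (al n) (be n) := fun h => ht.2 (mem_iUnion.2 ⟨n, h⟩)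
  simp only [mem_Ioo, not_and, not_lt] at hnot
  have hg := gp_pos n
  rcases le_or_gt t (al n) with h | h
  · have : gp n / 6 ≤ md n - t := by simp only [md, al] at *; linarith
    nlinarith
  · have : gp n / 6 ≤ t - md n := by
      have := hnot h
      simp only [md, be] at *; linarith
    nlinarith

lemma KK_volume : 0 < volume KK := by
  have hU : volume (⋃ n, Ioo (al n) (be n)) ≤ ENNReal.ofReal (1/3) := by
    refine le_trans (measure_iUnion_le _) ?_
    have hvol : ∀ n, volume (Ioo (al n) (be n)) = ENNReal.ofReal (gp n / 3) := by
      intro n; rw [Real.volume_Ioo]; congr 1; simp only [be, al]; ring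
    calc ∑' n, volume (Ioo (al n) (be n)) = ∑' n, ENNReal.ofReal (gp n / 3) := by
          simp only [hvol]
      _ ≤ ENNReal.ofReal (1/3) := by
          rw [ENNReal.tsum_eq_iSup_sum]
          refine iSup_le fun F => ?_
          obtain ⟨N, hN⟩ := F.exists_nat_subset_range
          calc ∑ n ∈ F, ENNReal.ofReal (gp n / 3)
              ≤ ∑ n ∈ Finset.range N, ENNReal.ofReal (gp n / 3) :=
                Finset.sum_le_sum_of_subset hN
            _ = ENNReal.ofReal (∑ n ∈ Finset.range N, gp n / 3) :=
                (ENNReal.ofReal_sum_of_nonneg (fun n _ => by linarith [gp_pos n])).symm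
            _ ≤ ENNReal.ofReal (1/3) := by
                apply ENNReal.ofReal_le_ofReal
                have hsum : ∑ n ∈ Finset.range N, gp n = qq N - qq 0 := by
                  simpa [gp] using Finset.sum_range_sub qq N
                rw [← Finset.sum_div, hsum, qq_zero]
                have := qq_lt_one N; linarith
  have h1 : volume (Icc (0:ℝ) 1) = 1 := by simp
  have h2 : (1:ℝ≥0∞) - ENNReal.ofReal (1/3) ≤ volume KK := by
    calc (1:ℝ≥0∞) - ENNReal.ofReal (1/3)
        ≤ volume (Icc (0:ℝ) 1) - volume (⋃ n, Ioo (al n) (be n)) := by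
          rw [h1]; exact tsub_le_tsub le_rfl hU
      _ ≤ volume KK := le_measure_diff
  refine lt_of_lt_of_le ?_ h2
  rw [show (1:ℝ≥0∞) = ENNReal.ofReal 1 by simp, ← ENNReal.ofReal_sub _ (by norm_num)]
  exact ENNReal.ofReal_pos.2 (by norm_num)

/-! ### Invariance of the cone -/

lemma cone_key (x0 x1 x3 s d : ℝ) (hx1 : 0 < x1) (hx3 : 0 ≤ x3) (hs : 0 < s)
    (h : d ^ 2 ≤ 2 * x1 ^ 3 * x3) :
    (x1^3) * (3*x1^2*s + 3*x1*s^2 + s^3) * ((d + x0 * x1 * s + x0 * s ^ 2 / 2) ^ 2)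
      ≤ (x1^3) * (3*x1^2*s + 3*x1*s^2 + s^3) * (2 * (x1 + s) ^ 3 * (x3 + x0 ^ 2 * s / 2)) := by
  have hE : (x1 * s + s ^ 2 / 2) ^ 2 ≤ s * (3*x1^2*s + 3*x1*s^2 + s^3) := by
    nlinarith [mul_pos (mul_pos hx1 hx1) (mul_pos hs hs), mul_pos (mul_pos hx1 hs) (mul_pos hs hs), sq_nonneg (s*s)]
  have t1 : (3*x1^2*s + 3*x1*s^2 + s^3) * ((x1+s)^3) * (d ^ 2)
      ≤ (3*x1^2*s + 3*x1*s^2 + s^3) * ((x1+s)^3) * (2 * x1^3 * x3) :=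
    mul_le_mul_of_nonneg_left h (by positivity)
  have t2 : (x1^3) * x0 ^ 2 * ((x1+s)^3) * ((x1 * s + s ^ 2 / 2) ^ 2)
      ≤ (x1^3) * x0 ^ 2 * ((x1+s)^3) * (s * (3*x1^2*s + 3*x1*s^2 + s^3)) :=
    mul_le_mul_of_nonneg_left hE (by positivity)
  have t3 : 0 ≤ ((3*x1^2*s + 3*x1*s^2 + s^3) * d - (x1^3) * (x0 * (x1 * s + s ^ 2 / 2))) ^ 2 := sq_nonneg _
  linarith [t1, t2, t3]

lemma cone_ineq (x0 x1 x3 s d : ℝ) (hx1 : 0 ≤ x1) (hx3 : 0 ≤ x3) (hs : 0 ≤ s)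
    (h : d ^ 2 ≤ 2 * x1 ^ 3 * x3) :
    (d + x0 * x1 * s + x0 * s ^ 2 / 2) ^ 2 ≤ 2 * (x1 + s) ^ 3 * (x3 + x0 ^ 2 * s / 2) := by
  rcases eq_or_lt_of_le hs with rfl | hs
  · simpa using h
  rcases eq_or_lt_of_le hx1 with rfl | hx1
  · have hd : d = 0 := by nlinarith [sq_nonneg d]
    subst hd
    nlinarith [sq_nonneg x0, mul_nonneg (mul_nonneg hs.le hs.le) (mul_nonneg hs.le hx3)]
  · exact le_of_mul_le_mul_left (cone_key x0 x1 x3 s d hx1 hx3 hs h) (by positivity)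

lemma X1inv (K : Set ℝ) : ∀ x ∈ Eset K, ∀ a : ℝ, F23mul x ![a, 0, 0, 0, 0] ∈ Eset K := by
  rintro x ⟨h1, h3, t, ht, hq⟩ a
  refine ⟨?_, ?_, t, ht, ?_⟩ <;> simp [F23mul] <;> [exact h1; exact h3; exact hq]

lemma X2mono (K : Set ℝ) : ∀ x ∈ Eset K, ∀ s : ℝ, 0 ≤ s → F23mul x ![0, s, 0, 0, 0] ∈ Eset K := by
  rintro x ⟨h1, h3, t, ht, hq⟩ s hs
  refine ⟨?_, ?_, t, ht, ?_⟩ <;> simp [F23mul]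
  · linarith
  · nlinarith [sq_nonneg (x 0), h3]
  · have := cone_ineq (x 0) (x 1) (x 3) s (x 4 - t) h1 h3 hs hq
    nlinarith [this]

/-! ### The slice function -/

lemma slice_set (K : Set ℝ) (p1 p3 p4 x5 : ℝ) :
    {x2 : ℝ | (![p1, x2, p3, p4, x5] : Fin 5 → ℝ) ∈ Eset K}
    = {x2 : ℝ | 0 ≤ x2 ∧ 0 ≤ p4 ∧ ∃ t ∈ K, (x5 - t) ^ 2 ≤ 2 * x2 ^ 3 * p4} := by
  ext x2; simp [Eset]

section slice
variable (p4 : ℝ) (hp4 : 0 < p4)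

noncomputable def SS (x5 : ℝ) : Set ℝ :=
  {x2 : ℝ | 0 ≤ x2 ∧ 0 ≤ p4 ∧ ∃ t ∈ KK, (x5 - t) ^ 2 ≤ 2 * x2 ^ 3 * p4}

noncomputable def ff (x5 : ℝ) : ℝ := sInf (SS p4 x5)

lemma SS_bddBelow (x5 : ℝ) : BddBelow (SS p4 x5) := ⟨0, fun _ hx => hx.1⟩

include hp4 in
lemma SS_nonempty (x5 : ℝ) : (SS p4 x5).Nonempty := by
  refine ⟨max 1 ((x5 - al 0) ^ 2 / (2 * p4)), le_trans zero_le_one (le_max_left _ _),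
    hp4.le, al 0, al_mem_KK 0, ?_⟩
  set x2 := max 1 ((x5 - al 0) ^ 2 / (2 * p4)) with hx2
  have h1 : (1:ℝ) ≤ x2 := le_max_left _ _
  have h2 : (x5 - al 0) ^ 2 / (2 * p4) ≤ x2 := le_max_right _ _
  have h3 : x2 ≤ x2 ^ 3 := by
    nlinarith [mul_le_mul h1 h1 zero_le_one (by linarith : (0:ℝ) ≤ x2)]
  have h4 : (x5 - al 0) ^ 2 ≤ 2 * x2 * p4 := by
    rw [div_le_iff₀ (by positivity)] at h2; linarith
  nlinarith

include hp4 in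
lemma ff_al (n : ℕ) : ff p4 (al n) = 0 := by
  apply le_antisymm
  · exact csInf_le (SS_bddBelow p4 _) ⟨le_rfl, hp4.le, al n, al_mem_KK n, by simp⟩
  · exact le_csInf (SS_nonempty p4 hp4 _) (fun x hx => hx.1)

include hp4 in
lemma ff_md (n : ℕ) : min 1 (1 / (288 * p4)) / ((n:ℝ) + 2) ≤ ff p4 (md n) := by
  set c := min 1 (1 / (288 * p4)) with hc
  have hcpos : 0 < c := lt_min one_pos (by positivity)
  apply le_csInf (SS_nonempty p4 hp4 _)
  rintro x2 ⟨hx2, -, t, ht, hq⟩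
  have h1 : (gp n / 6) ^ 2 ≤ 2 * x2 ^ 3 * p4 := le_trans (md_far n t ht) hq
  have hs : Real.sqrt ((n:ℝ) + 2) ^ 2 = (n:ℝ) + 2 := Real.sq_sqrt (by positivity)
  have hspos : 0 < Real.sqrt ((n:ℝ) + 2) := Real.sqrt_pos.2 (by positivity)
  have hg := gp_ge n
  have hggpos := gp_pos n
  have hnp : (0:ℝ) < (n:ℝ) + 2 := by positivity
  have h2 : 1 / (4 * ((n:ℝ) + 2) ^ 3) ≤ (gp n) ^ 2 := by
    have : (1 / (2 * ((n:ℝ) + 2) * Real.sqrt ((n:ℝ) + 2))) ^ 2 ≤ (gp n) ^ 2 := by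
      apply sq_le_sq' _ hg
      have : 0 < 1 / (2 * ((n:ℝ) + 2) * Real.sqrt ((n:ℝ) + 2)) := by positivity
      linarith
    refine le_trans (le_of_eq ?_) this
    rw [div_pow, one_pow, mul_pow, mul_pow, hs]
    ring_nf
  have h3 : 1 / (288 * p4 * ((n:ℝ) + 2) ^ 3) ≤ x2 ^ 3 := by
    have hA : gp n ^ 2 ≤ 72 * x2 ^ 3 * p4 := by nlinarith [h1]
    have hB := mul_le_mul_of_nonneg_right hA (show (0:ℝ) ≤ 4 * ((n:ℝ)+2) ^ 3 by positivity)
    rw [div_le_iff₀ (by positivity)]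
    rw [div_le_iff₀ (by positivity)] at h2
    nlinarith [h2, hB]
  have h4 : (c / ((n:ℝ) + 2)) ^ 3 ≤ x2 ^ 3 := by
    refine le_trans ?_ h3
    rw [div_pow, div_le_div_iff₀ (by positivity) (by positivity)]
    have hc1 : c ≤ 1 := min_le_left _ _
    have hc2 : c ≤ 1 / (288 * p4) := min_le_right _ _
    have hcc : c * c ≤ 1 * 1 := mul_le_mul hc1 hc1 hcpos.le zero_le_one
    have : c ^ 3 ≤ 1 / (288 * p4) := by nlinarith [hcc, hcpos, hc2]
    calc c ^ 3 * (288 * p4 * ((n:ℝ)+2) ^ 3) ≤ 1 / (288 * p4) * (288 * p4 * ((n:ℝ)+2) ^ 3) := by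
          apply mul_le_mul_of_nonneg_right this (by positivity)
      _ = 1 * ((n:ℝ)+2) ^ 3 := by field_simp
  by_contra hcon
  push_neg at hcon
  have : x2 ^ 3 < (c / ((n:ℝ) + 2)) ^ 3 := by
    apply pow_lt_pow_left₀ hcon hx2
    norm_num
  linarith
end slice

/-! ### The unbounded-variation argument -/

section var
variable (p4 : ℝ) (hp4 : 0 < p4)

noncomputable def uu (i : ℕ) : ℝ := if i % 2 = 0 then al (i / 2) else md (i / 2)

lemma uu_even (k : ℕ) : uu (2 * k) = al k := by
  have h1 : (2 * k) % 2 = 0 := by omega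
  have h2 : (2 * k) / 2 = k := by omega
  simp [uu, h1, h2]

lemma uu_odd (k : ℕ) : uu (2 * k + 1) = md k := by
  have h1 : (2 * k + 1) % 2 = 1 := by omega
  have h2 : (2 * k + 1) / 2 = k := by omega
  simp [uu, h1, h2]

lemma al_le_md (k : ℕ) : al k ≤ md k := by
  simp only [al, md]; linarith [gp_pos k]

lemma md_le_al_succ (k : ℕ) : md k ≤ al (k + 1) := by
  have h1 : md k ≤ qq (k + 1) := by simp only [md, gp]; linarith [qq_succ_gt k]
  have h2 : qq (k + 1) ≤ al (k + 1) := by simp only [al]; linarith [gp_pos (k+1)]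
  linarith

lemma uu_mono : Monotone uu := by
  apply monotone_nat_of_le_succ
  intro i
  rcases Nat.even_or_odd i with ⟨k, hk⟩ | ⟨k, hk⟩
  · have : i = 2 * k := by omega
    subst this
    rw [uu_even, uu_odd]; exact al_le_md k
  · have : i = 2 * k + 1 := by omega
    subst this
    rw [uu_odd, show 2 * k + 1 + 1 = 2 * (k + 1) by ring, uu_even]
    exact md_le_al_succ k

lemma uu_mem (i : ℕ) : uu i ∈ univ ∩ Icc (0:ℝ) 1 := by
  refine ⟨trivial, ?_⟩
  rcases Nat.even_or_odd i with ⟨k, hk⟩ | ⟨k, hk⟩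
  · have : i = 2 * k := by omega
    subst this; rw [uu_even]; exact mem_Icc_al k
  · have : i = 2 * k + 1 := by omega
    subst this; rw [uu_odd]; exact mem_Icc_md k

include hp4 in
lemma evar_top : eVariationOn (ff p4) (univ ∩ Icc 0 1) = ⊤ := by
  set c := min 1 (1 / (288 * p4)) with hcdef
  have hcpos : 0 < c := lt_min one_pos (by positivity)
  by_contra hne
  have hharm : Tendsto (fun N => ∑ k ∈ Finset.range N, c / ((k:ℝ) + 2)) atTop atTop := by
    have h0 : Tendsto (fun N => ∑ i ∈ Finset.range N, 1 / ((i:ℝ) + 1)) atTop atTop :=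
      Real.tendsto_sum_range_one_div_nat_succ_atTop
    have h3 : Tendsto (fun N => ∑ k ∈ Finset.range N, 1 / ((k:ℝ) + 2)) atTop atTop := by
      have hhalf : Tendsto (fun N => (1/2 : ℝ) * ∑ i ∈ Finset.range N, 1 / ((i:ℝ) + 1))
          atTop atTop := h0.const_mul_atTop (by norm_num)
      apply tendsto_atTop_mono _ hhalf
      intro N
      rw [Finset.mul_sum]
      apply Finset.sum_le_sum
      intro i _
      have hi : (0:ℝ) < (i:ℝ) + 1 := by positivity
      have hi2 : (0:ℝ) < (i:ℝ) + 2 := by positivity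
      have he : 1/2 * (1/((i:ℝ)+1)) = 1/(2*((i:ℝ)+1)) := by rw [div_mul_div_comm]; norm_num
      rw [he, div_le_div_iff₀ (by positivity) hi2]
      linarith
    have h4 : ∀ N, ∑ k ∈ Finset.range N, c / ((k:ℝ) + 2)
        = c * ∑ k ∈ Finset.range N, 1 / ((k:ℝ) + 2) := by
      intro N; rw [Finset.mul_sum]; congr 1; ext k; ring
    simp only [h4]
    exact h3.const_mul_atTop hcpos
  have hbound : ∀ N : ℕ, ENNReal.ofReal (∑ k ∈ Finset.range N, c / ((k:ℝ) + 2))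
      ≤ eVariationOn (ff p4) (univ ∩ Icc 0 1) := by
    intro N
    have hsum := eVariationOn.sum_le (f := ff p4) (n := 2 * N) uu_mono uu_mem
    refine le_trans ?_ hsum
    have himg := Finset.sum_image (s := Finset.range N) (g := fun k => 2 * k)
      (f := fun i => edist (ff p4 (uu (i + 1))) (ff p4 (uu i)))
      (fun a _ b _ h => by simp only [] at h; omega)
    have step1 : ∑ k ∈ Finset.range N,
        edist (ff p4 (uu (2 * k + 1))) (ff p4 (uu (2 * k)))
        ≤ ∑ i ∈ Finset.range (2 * N), edist (ff p4 (uu (i + 1))) (ff p4 (uu i)) := by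
      rw [← himg]
      apply Finset.sum_le_sum_of_subset
      intro i hi
      simp only [Finset.mem_image, Finset.mem_range] at hi ⊢
      obtain ⟨k, hk, rfl⟩ := hi; omega
    refine le_trans ?_ step1
    have step2 : ∀ k : ℕ, ENNReal.ofReal (c / ((k:ℝ) + 2))
        ≤ edist (ff p4 (uu (2 * k + 1))) (ff p4 (uu (2 * k))) := by
      intro k
      rw [uu_odd, uu_even, edist_dist, Real.dist_eq, ff_al p4 hp4, sub_zero]
      have h5 := ff_md p4 hp4 k
      have h6 : 0 ≤ ff p4 (md k) := le_trans (by positivity) h5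
      rw [abs_of_nonneg h6]
      exact ENNReal.ofReal_le_ofReal h5
    calc ENNReal.ofReal (∑ k ∈ Finset.range N, c / ((k:ℝ) + 2))
        = ∑ k ∈ Finset.range N, ENNReal.ofReal (c / ((k:ℝ) + 2)) :=
          ENNReal.ofReal_sum_of_nonneg (fun k _ => by positivity)
      _ ≤ ∑ k ∈ Finset.range N, edist (ff p4 (uu (2 * k + 1))) (ff p4 (uu (2 * k))) :=
          Finset.sum_le_sum (fun k _ => step2 k)
  set M := (eVariationOn (ff p4) (univ ∩ Icc 0 1)).toReal
  obtain ⟨N, hN⟩ := (hharm.eventually_ge_atTop (M + 1)).exists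
  have hb := hbound N
  have hle : M + 1 ≤ M := by
    calc M + 1 ≤ ∑ k ∈ Finset.range N, c / ((k:ℝ) + 2) := hN
      _ ≤ M := by
          rw [← ENNReal.toReal_ofReal
            (show (0:ℝ) ≤ ∑ k ∈ Finset.range N, c / ((k:ℝ) + 2) by positivity)]
          exact ENNReal.toReal_mono hne hb
  linarith
end var

/-- There is a compact set `K ⊆ [0,1]` of positive Lebesgue measure such that the set
`E = ⋃_{t ∈ K} exp(tX₅)·𝒞 ⊆ 𝔽₂₃` is `X₁`-invariant and forward `X₂`-monotone (hence
has constant horizontal normal `X₂`), yet for all `p₁, p₃ ∈ ℝ` and `p₄ > 0` the slice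
function `x₅ ↦ inf {x₂ : (p₁,x₂,p₃,p₄,x₅) ∈ E}` fails to have locally bounded
variation (so `E` is not a Euclidean Caccioppoli set). -/
theorem exists_constant_normal_set_not_Caccioppoli :
    ∃ K : Set ℝ, IsCompact K ∧ K ⊆ Icc 0 1 ∧ 0 < volume K ∧
      (∀ x ∈ Eset K, ∀ a : ℝ, F23mul x ![a, 0, 0, 0, 0] ∈ Eset K) ∧
      (∀ x ∈ Eset K, ∀ s : ℝ, 0 ≤ s → F23mul x ![0, s, 0, 0, 0] ∈ Eset K) ∧
      (∀ p1 p3 p4 : ℝ, 0 < p4 →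
        ¬ LocallyBoundedVariationOn
          (fun x5 : ℝ => sInf {x2 : ℝ | (![p1, x2, p3, p4, x5] : Fin 5 → ℝ) ∈ Eset K})
          univ) := by
  refine ⟨KK, KK_compact, diff_subset, KK_volume, X1inv KK, X2mono KK, ?_⟩
  intro p1 p3 p4 hp4 hbv
  have hfe : (fun x5 : ℝ => sInf {x2 : ℝ | (![p1, x2, p3, p4, x5] : Fin 5 → ℝ) ∈ Eset KK})
      = ff p4 := by
    funext x5
    rw [slice_set]
    rfl
  rw [hfe] at hbv
  exact (hbv 0 1 (mem_univ 0) (mem_univ 1)) (evar_top p4 hp4)
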